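/- Define I(y) = ∑_{k=1}^{N+2}(p(k)/2)(Δ²y(k-2))² − ∑_{k=1}^{N+1}(q(k)/2)(Δy(k-1))² on E. If p_min·η'(p) − q_max·η(q) > 0, then I is strongly convex on E: for all y, h ∈ E with h ≠ 0, I(y+h) − I(y) − δI(y;h) ≥ ½(p_min·η'(p) − q_max·η(q))·‖h‖² > 0. -/

import Mathlib

open Finset Matrix

/-- Forward difference `Δy(k) = y(k+1) - y(k)`. -/
def fd (y : ℤ → ℝ) (k : ℤ) : ℝ := y (k + 1) - y k

/-- Second forward difference `Δ²y(k) = y(k+2) - 2y(k+1) + y(k)`. -/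
def fd2 (y : ℤ → ℝ) (k : ℤ) : ℝ := y (k + 2) - 2 * y (k + 1) + y k

/-- Dirichlet boundary conditions `y(-1) = y(0) = y(N+1) = y(N+2) = 0`. -/
def bc (N : ℕ) (y : ℤ → ℝ) : Prop :=
  y (-1) = 0 ∧ y 0 = 0 ∧ y ((N : ℤ) + 1) = 0 ∧ y ((N : ℤ) + 2) = 0

/-- `y` satisfies `Δ²(p(k)Δ²y(k-2)) + Δ(q(k)Δy(k-1)) + f(k,y(k)) = 0` for `k ∈ Z[1,N]`. -/
def solves (N : ℕ) (p q : ℤ → ℝ) (f : ℤ → ℝ → ℝ) (y : ℤ → ℝ) : Prop :=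
  ∀ k ∈ Finset.Icc (1 : ℤ) (N : ℤ),
    fd2 (fun j => p j * fd2 y (j - 2)) k
      + fd (fun j => q j * fd y (j - 1)) k + f k (y k) = 0

/-- `F(k,s) = ∫₀ˢ f(k,t) dt`. -/
noncomputable def Fint (f : ℤ → ℝ → ℝ) (k : ℤ) (s : ℝ) : ℝ := ∫ t in (0 : ℝ)..s, f k t

/-- The energy functional
`J(y) = ∑_{k=1}^{N+2} (p(k)/2)(Δ²y(k-2))² − ∑_{k=1}^{N+1} (q(k)/2)(Δy(k-1))² + ∑_{k=1}^{N} F(k,y(k))`. -/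
noncomputable def J (N : ℕ) (p q : ℤ → ℝ) (f : ℤ → ℝ → ℝ) (y : ℤ → ℝ) : ℝ :=
  ∑ k ∈ Finset.Icc (1 : ℤ) ((N : ℤ) + 2), p k / 2 * (fd2 y (k - 2)) ^ 2
    - ∑ k ∈ Finset.Icc (1 : ℤ) ((N : ℤ) + 1), q k / 2 * (fd y (k - 1)) ^ 2
    + ∑ k ∈ Finset.Icc (1 : ℤ) (N : ℤ), Fint f k (y k)

open Matrix

/-- The (N+1)×N first-difference matrix under zero boundary conditions. -/
def Vmat (N : ℕ) : Matrix (Fin (N + 1)) (Fin N) ℝ := fun i j =>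
  if (i : ℕ) = (j : ℕ) then 1 else if (i : ℕ) = (j : ℕ) + 1 then -1 else 0

/-- The (N+2)×N second-difference matrix under zero boundary conditions. -/
def Wmat (N : ℕ) : Matrix (Fin (N + 2)) (Fin N) ℝ := fun i j =>
  if (i : ℕ) = (j : ℕ) then 1
  else if (i : ℕ) = (j : ℕ) + 1 then -2
  else if (i : ℕ) = (j : ℕ) + 2 then 1 else 0

/-- `lam` is the smallest eigenvalue of the matrix `M`. -/
def IsSmallestEigenvalue {n : ℕ} (M : Matrix (Fin n) (Fin n) ℝ) (lam : ℝ) : Prop :=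
  IsLeast {μ : ℝ | ∃ x : Fin n → ℝ, x ≠ 0 ∧ M.mulVec x = μ • x} lam

/-- The quadratic part `I(y) = ∑ (p(k)/2)(Δ²y(k-2))² − ∑ (q(k)/2)(Δy(k-1))²`. -/
noncomputable def Iq (N : ℕ) (p q : ℤ → ℝ) (y : ℤ → ℝ) : ℝ :=
  ∑ k ∈ Finset.Icc (1 : ℤ) ((N : ℤ) + 2), p k / 2 * (fd2 y (k - 2)) ^ 2
    - ∑ k ∈ Finset.Icc (1 : ℤ) ((N : ℤ) + 1), q k / 2 * (fd y (k - 1)) ^ 2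

lemma sum_ite_fin {N : ℕ} (g : Fin N → ℝ) (m : ℕ) :
    (∑ j : Fin N, if m = (j : ℕ) then g j else 0)
      = if hm : m < N then g ⟨m, hm⟩ else 0 := by
  split_ifs with hm
  · have : ∀ j : Fin N, (m = (j : ℕ)) = ((⟨m, hm⟩ : Fin N) = j) := by
      intro j; simp [Fin.ext_iff]
    simp only [this]
    simp
  · apply Finset.sum_eq_zero
    intro j _
    rw [if_neg]
    omega

lemma Vmat_mulVec {N : ℕ} (h : ℤ → ℝ) (h0 : h 0 = 0) (hN1 : h ((N : ℤ) + 1) = 0)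
    (i : Fin (N + 1)) :
    (Vmat N *ᵥ fun j : Fin N => h ((j : ℤ) + 1)) i = fd h (i : ℤ) := by
  set x : Fin N → ℝ := fun j : Fin N => h ((j : ℤ) + 1) with hx
  have step : ∀ j : Fin N, Vmat N i j * x j
      = (if (i : ℕ) = (j : ℕ) then x j else 0)
        + (if (i : ℕ) = (j : ℕ) + 1 then -x j else 0) := by
    intro j
    unfold Vmat
    split_ifs <;> (try (exfalso; omega)) <;> ring
  have hsum : (Vmat N *ᵥ x) i
      = (if hm : (i : ℕ) < N then x ⟨(i : ℕ), hm⟩ else 0)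
        + (if hm : (i : ℕ) - 1 < N ∧ 1 ≤ (i : ℕ) then -x ⟨(i : ℕ) - 1, hm.1⟩ else 0) := by
    rw [Matrix.mulVec, dotProduct]
    simp only [step]
    rw [Finset.sum_add_distrib, sum_ite_fin]
    congr 1
    rcases Nat.eq_zero_or_pos (i : ℕ) with h1 | h1
    · rw [dif_neg (by omega)]
      apply Finset.sum_eq_zero
      intro j _
      rw [if_neg (by omega)]
    · have : ∀ j : Fin N, ((i : ℕ) = (j : ℕ) + 1) = ((i : ℕ) - 1 = (j : ℕ)) := by
        intro j; simp only [eq_iff_iff]; omega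
      simp only [this]
      rw [sum_ite_fin (fun j => -x j) ((i : ℕ) - 1)]
      split_ifs with hA hB hB
      · rfl
      · omega
      · omega
      · rfl
  rw [hsum, fd]
  have hi : (i : ℕ) ≤ N := by omega
  rcases Nat.lt_or_ge (i : ℕ) N with hlt | hge
  · rcases Nat.eq_zero_or_pos (i : ℕ) with h1 | h1
    · rw [dif_pos hlt, dif_neg (by omega)]
      simp only [hx, h1]
      norm_num [h0]
    · rw [dif_pos hlt, dif_pos ⟨by omega, h1⟩]
      simp only [hx]
      have : (((i : ℕ) - 1 : ℕ) : ℤ) + 1 = (i : ℕ) := by omega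
      rw [this]
      push_cast
      ring
  · have hieq : (i : ℕ) = N := by omega
    rcases Nat.eq_zero_or_pos N with hN | hN
    · rw [dif_neg (by omega), dif_neg (by omega)]
      have e0 : ((i : ℕ) : ℤ) = 0 := by omega
      have e1 : ((N : ℕ) : ℤ) = 0 := by omega
      rw [e1] at hN1
      norm_num at hN1
      rw [e0]
      norm_num [h0, hN1]
    · rw [dif_neg (by omega), dif_pos ⟨by omega, by omega⟩]
      simp only [hx]
      have e1 : (((i : ℕ) - 1 : ℕ) : ℤ) + 1 = (N : ℤ) := by omega
      have e2 : ((i : ℕ) : ℤ) + 1 = (N : ℤ) + 1 := by omega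
      have e3 : ((i : ℕ) : ℤ) = (N : ℤ) := by omega
      rw [e1, e2, e3, hN1]
      ring

lemma Wmat_mulVec {N : ℕ} (h : ℤ → ℝ) (hm1 : h (-1) = 0) (h0 : h 0 = 0)
    (hN1 : h ((N : ℤ) + 1) = 0) (hN2 : h ((N : ℤ) + 2) = 0) (i : Fin (N + 2)) :
    (Wmat N *ᵥ fun j : Fin N => h ((j : ℤ) + 1)) i = fd2 h ((i : ℤ) - 1) := by
  set x : Fin N → ℝ := fun j : Fin N => h ((j : ℤ) + 1) with hx
  have step : ∀ j : Fin N, Wmat N i j * x j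
      = (if (i : ℕ) = (j : ℕ) then x j else 0)
        + (if (i : ℕ) = (j : ℕ) + 1 then -2 * x j else 0)
        + (if (i : ℕ) = (j : ℕ) + 2 then x j else 0) := by
    intro j
    unfold Wmat
    split_ifs <;> (try (exfalso; omega)) <;> ring
  have hiN : (i : ℕ) ≤ N + 1 := by omega
  have hA : (∑ j : Fin N, if (i : ℕ) = (j : ℕ) then x j else 0) = h ((i : ℤ) + 1) := by
    rw [sum_ite_fin]
    split_ifs with hm
    · simp only [hx]
    · rcases Nat.eq_or_lt_of_le (Nat.le_of_lt_succ (by omega : (i:ℕ) < N + 2)) with hc | hc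
      · have : ((i : ℕ) : ℤ) + 1 = (N : ℤ) + 2 := by omega
        rw [this, hN2]
      · have : ((i : ℕ) : ℤ) + 1 = (N : ℤ) + 1 := by omega
        rw [this, hN1]
  have hB : (∑ j : Fin N, if (i : ℕ) = (j : ℕ) + 1 then -2 * x j else 0)
      = -2 * h ((i : ℤ)) := by
    rcases Nat.eq_zero_or_pos (i : ℕ) with h1 | h1
    · rw [Finset.sum_eq_zero (fun j _ => by rw [if_neg (by omega)])]
      have : ((i : ℕ) : ℤ) = 0 := by omega
      rw [this, h0]; ring
    · have hc : ∀ j : Fin N, ((i : ℕ) = (j : ℕ) + 1) = ((i : ℕ) - 1 = (j : ℕ)) := by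
        intro j; simp only [eq_iff_iff]; omega
      simp only [hc]
      rw [sum_ite_fin (fun j => -2 * x j) ((i : ℕ) - 1)]
      split_ifs with hm
      · simp only [hx]
        have : (((i : ℕ) - 1 : ℕ) : ℤ) + 1 = ((i : ℕ) : ℤ) := by omega
        rw [this]
      · have : ((i : ℕ) : ℤ) = (N : ℤ) + 1 := by omega
        rw [this, hN1]; ring
  have hC : (∑ j : Fin N, if (i : ℕ) = (j : ℕ) + 2 then x j else 0)
      = h ((i : ℤ) - 1) := by
    rcases Nat.lt_or_ge (i : ℕ) 2 with h1 | h1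
    · rw [Finset.sum_eq_zero (fun j _ => by rw [if_neg (by omega)])]
      rcases (by omega : (i : ℕ) = 0 ∨ (i : ℕ) = 1) with hI | hI
      · have : ((i : ℕ) : ℤ) - 1 = -1 := by omega
        rw [this, hm1]
      · have : ((i : ℕ) : ℤ) - 1 = 0 := by omega
        rw [this, h0]
    · have hc : ∀ j : Fin N, ((i : ℕ) = (j : ℕ) + 2) = ((i : ℕ) - 2 = (j : ℕ)) := by
        intro j; simp only [eq_iff_iff]; omega
      simp only [hc]
      rw [sum_ite_fin x ((i : ℕ) - 2)]
      split_ifs with hm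
      · simp only [hx]
        have : (((i : ℕ) - 2 : ℕ) : ℤ) + 1 = ((i : ℕ) : ℤ) - 1 := by omega
        rw [this]
      · have : ((i : ℕ) : ℤ) - 1 = (N : ℤ) + 1 := by omega
        rw [this, hN1]
  rw [Matrix.mulVec, dotProduct]
  simp only [step]
  rw [Finset.sum_add_distrib, Finset.sum_add_distrib, hA, hB, hC, fd2]
  ring_nf

lemma sum_Icc_eq_range (n : ℕ) (f : ℤ → ℝ) :
    ∑ k ∈ Finset.Icc (1 : ℤ) (n : ℤ), f k = ∑ j ∈ Finset.range n, f ((j : ℤ) + 1) := by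
  induction n with
  | zero => simp
  | succ m ih =>
      rw [Finset.sum_range_succ, ← ih]
      have e : ((m + 1 : ℕ) : ℤ) = (m : ℤ) + 1 := by push_cast; ring
      have hins : Finset.Icc (1 : ℤ) ((m : ℤ) + 1)
          = insert ((m : ℤ) + 1) (Finset.Icc (1 : ℤ) (m : ℤ)) := by
        ext k; simp only [Finset.mem_Icc, Finset.mem_insert]; omega
      rw [e, hins, Finset.sum_insert (by simp [Finset.mem_Icc])]
      ring

lemma sum_Icc_eq_fin (n : ℕ) (f : ℤ → ℝ) :
    ∑ k ∈ Finset.Icc (1 : ℤ) (n : ℤ), f k = ∑ j : Fin n, f ((j : ℤ) + 1) := by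
  rw [sum_Icc_eq_range,
    Fin.sum_univ_eq_sum_range (fun j : ℕ => f ((j : ℤ) + 1)) n]

lemma herm_tmul {m n : ℕ} (V : Matrix (Fin m) (Fin n) ℝ) : (Vᵀ * V).IsHermitian := by
  rw [← Matrix.conjTranspose_eq_transpose_of_trivial]
  exact Matrix.isHermitian_conjTranspose_mul_self V

lemma dot_tmul {m n : ℕ} (V : Matrix (Fin m) (Fin n) ℝ) (x : Fin n → ℝ) :
    x ⬝ᵥ ((Vᵀ * V) *ᵥ x) = ∑ i : Fin m, (V *ᵥ x) i ^ 2 := by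
  rw [← Matrix.mulVec_mulVec, Matrix.dotProduct_mulVec, Matrix.vecMul_transpose]
  simp [dotProduct, sq]

lemma rayleigh {n : ℕ} {M : Matrix (Fin n) (Fin n) ℝ} (hM : M.IsHermitian) {lam : ℝ}
    (h : IsSmallestEigenvalue M lam) (x : Fin n → ℝ) :
    lam * (x ⬝ᵥ x) ≤ x ⬝ᵥ (M *ᵥ x) := by
  set M' : Matrix (Fin n) (Fin n) ℝ := M - lam • 1 with hM'def
  have hM' : M'.IsHermitian := by
    unfold Matrix.IsHermitian
    rw [hM'def, conjTranspose_sub, hM.eq]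
    congr 1
    simp [conjTranspose_smul]
  have hps : M'.PosSemidef := by
    apply hM'.posSemidef_iff_eigenvalues_nonneg.mpr
    intro i
    set v : Fin n → ℝ := ⇑(hM'.eigenvectorBasis i) with hv
    have hv0 : v ≠ 0 := by
      intro h0
      exact hM'.eigenvectorBasis.orthonormal.ne_zero i (by ext j; exact congrFun h0 j)
    have hev : M' *ᵥ v = hM'.eigenvalues i • v := hM'.mulVec_eigenvectorBasis i
    have hMv : M *ᵥ v = (hM'.eigenvalues i + lam) • v := by
      have : M' *ᵥ v = M *ᵥ v - lam • v := by
        rw [hM'def, sub_mulVec, smul_mulVec, one_mulVec]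
      rw [this] at hev
      rw [add_smul]
      linear_combination (norm := module) hev
    have hmem : (hM'.eigenvalues i + lam) ∈
        {μ : ℝ | ∃ x : Fin n → ℝ, x ≠ 0 ∧ M.mulVec x = μ • x} := ⟨v, hv0, hMv⟩
    have := h.2 hmem
    simp only [Pi.zero_apply]
    linarith
  have h0 : 0 ≤ x ⬝ᵥ (M' *ᵥ x) := by
    have := hps.dotProduct_mulVec_nonneg x
    simpa using this
  have hexp : x ⬝ᵥ (M' *ᵥ x) = x ⬝ᵥ (M *ᵥ x) - lam * (x ⬝ᵥ x) := by
    rw [hM'def, sub_mulVec, smul_mulVec, one_mulVec, dotProduct_sub, dotProduct_smul]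
    simp
  linarith [hexp ▸ h0]

lemma sum_shift (a b c : ℤ) (g : ℤ → ℝ) :
    ∑ k ∈ Finset.Icc a b, g (k + c) = ∑ k ∈ Finset.Icc (a + c) (b + c), g k := by
  rw [← Finset.map_add_right_Icc, Finset.sum_map]
  rfl


set_option maxHeartbeats 2000000 in
/-- If `p_min·η'(p) − q_max·η(q) > 0` then `I` is strongly convex on `E`:
`I(y+h) − I(y) − δI(y;h) ≥ ½(p_min·η'(p) − q_max·η(q))·‖h‖² > 0` for `h ≠ 0`. -/
theorem stmt_12 (N : ℕ) (hN : 1 ≤ N) (p q : ℤ → ℝ)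
    (lam1 lam2 : ℝ)
    (hlam1 : IsSmallestEigenvalue ((Vmat N)ᵀ * Vmat N) lam1)
    (hlam2 : IsSmallestEigenvalue ((Wmat N)ᵀ * Wmat N) lam2)
    (pmin qmax : ℝ)
    (hpmin : IsLeast (p '' Set.Icc (1 : ℤ) ((N : ℤ) + 2)) pmin)
    (hqmax : IsGreatest (q '' Set.Icc (1 : ℤ) ((N : ℤ) + 1)) qmax)
    (hcond : 0 < pmin * (if 0 ≤ pmin then lam2 else 16)
        - qmax * (if qmax < 0 then lam1 else 4))
    (y h : ℤ → ℝ) (hy : bc N y) (hh : bc N h)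
    (hne : ∃ k ∈ Finset.Icc (1 : ℤ) (N : ℤ), h k ≠ 0)
    (L : ℝ)
    (hL : HasDerivAt (fun ε : ℝ => Iq N p q (fun k => y k + ε * h k)) L 0) :
    (1 / 2) * (pmin * (if 0 ≤ pmin then lam2 else 16)
          - qmax * (if qmax < 0 then lam1 else 4))
        * ∑ k ∈ Finset.Icc (1 : ℤ) (N : ℤ), (h k) ^ 2
      ≤ Iq N p q (fun k => y k + h k) - Iq N p q y - L
    ∧ 0 < (1 / 2) * (pmin * (if 0 ≤ pmin then lam2 else 16)
          - qmax * (if qmax < 0 then lam1 else 4))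
        * ∑ k ∈ Finset.Icc (1 : ℤ) (N : ℤ), (h k) ^ 2 := by
  
  classical
  set c2 : ℝ := if 0 ≤ pmin then lam2 else 16 with hc2
  set c1 : ℝ := if qmax < 0 then lam1 else 4 with hc1
  set T : ℝ := ∑ k ∈ Finset.Icc (1 : ℤ) (N : ℤ), (h k) ^ 2 with hT
  obtain ⟨hbm1, hb0, hbN1, hbN2⟩ := hh
  set x : Fin N → ℝ := fun j => h ((j : ℤ) + 1) with hx
  have hTfin : T = ∑ j : Fin N, x j ^ 2 := by
    rw [hT, sum_Icc_eq_fin N (fun k => h k ^ 2)]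
  have hTdot : x ⬝ᵥ x = T := by
    rw [hTfin, dotProduct]
    exact Finset.sum_congr rfl fun j _ => (sq (x j)).symm
  set S1 : ℝ := ∑ k ∈ Finset.Icc (1 : ℤ) ((N : ℤ) + 1), (fd h (k - 1)) ^ 2 with hS1
  set S2 : ℝ := ∑ k ∈ Finset.Icc (1 : ℤ) ((N : ℤ) + 2), (fd2 h (k - 2)) ^ 2 with hS2
  have hV : ∀ i : Fin (N + 1), (Vmat N *ᵥ x) i = fd h (i : ℤ) := by
    intro i; rw [hx]; exact Vmat_mulVec h hb0 hbN1 i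
  have hW : ∀ i : Fin (N + 2), (Wmat N *ᵥ x) i = fd2 h ((i : ℤ) - 1) := by
    intro i; rw [hx]; exact Wmat_mulVec h hbm1 hb0 hbN1 hbN2 i
  have hS1fin : S1 = ∑ i : Fin (N + 1), ((Vmat N *ᵥ x) i) ^ 2 := by
    have e : ((N : ℤ) + 1) = ((N + 1 : ℕ) : ℤ) := by push_cast; ring
    rw [hS1, e, sum_Icc_eq_fin (N + 1) (fun k => (fd h (k - 1)) ^ 2)]
    apply Finset.sum_congr rfl
    intro j _
    rw [hV j]
    norm_num
  have hS2fin : S2 = ∑ i : Fin (N + 2), ((Wmat N *ᵥ x) i) ^ 2 := by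
    have e : ((N : ℤ) + 2) = ((N + 2 : ℕ) : ℤ) := by push_cast; ring
    rw [hS2, e, sum_Icc_eq_fin (N + 2) (fun k => (fd2 h (k - 2)) ^ 2)]
    apply Finset.sum_congr rfl
    intro j _
    rw [show ((j : ℤ) + 1 - 2) = (j : ℤ) - 1 from by ring, hW j]
  have hray1 : lam1 * T ≤ S1 := by
    have hr := rayleigh (herm_tmul (Vmat N)) hlam1 x
    rw [dot_tmul, hTdot] at hr
    rw [hS1fin]
    exact hr
  have hray2 : lam2 * T ≤ S2 := by
    have hr := rayleigh (herm_tmul (Wmat N)) hlam2 x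
    rw [dot_tmul, hTdot] at hr
    rw [hS2fin]
    exact hr
  have hexpand : ∀ a b : ℤ, -1 ≤ a → a ≤ 1 → (N : ℤ) ≤ b → b ≤ (N : ℤ) + 2 →
      ∑ k ∈ Finset.Icc a b, h k ^ 2 = T := by
    intro a b ha1 ha2 hb1 hb2
    rw [hT]
    refine (Finset.sum_subset (fun k hk => ?_) (fun k hk hk' => ?_)).symm
    · simp only [Finset.mem_Icc] at *; omega
    · simp only [Finset.mem_Icc] at hk hk'
      have hcase : k = -1 ∨ k = 0 ∨ k = (N : ℤ) + 1 ∨ k = (N : ℤ) + 2 := by omega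
      rcases hcase with rfl | rfl | rfl | rfl
      · simp [hbm1]
      · simp [hb0]
      · simp [hbN1]
      · simp [hbN2]
  have hup1 : S1 ≤ 4 * T := by
    have step : S1 ≤ ∑ k ∈ Finset.Icc (1 : ℤ) ((N : ℤ) + 1),
        (2 * h k ^ 2 + 2 * h (k - 1) ^ 2) := by
      rw [hS1]
      refine Finset.sum_le_sum fun k _ => ?_
      unfold fd
      have e : k - 1 + 1 = k := by ring
      rw [e]
      nlinarith [sq_nonneg (h k + h (k - 1))]
    have e1 : ∑ k ∈ Finset.Icc (1 : ℤ) ((N : ℤ) + 1), h k ^ 2 = T :=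
      hexpand 1 ((N : ℤ) + 1) (by omega) le_rfl (by omega) (by omega)
    have e2 : ∑ k ∈ Finset.Icc (1 : ℤ) ((N : ℤ) + 1), h (k - 1) ^ 2 = T := by
      have := sum_shift 0 (N : ℤ) 1 (fun k => h (k - 1) ^ 2)
      simp only [zero_add] at this
      rw [← this]
      rw [show (∑ k ∈ Finset.Icc (0 : ℤ) (N : ℤ), h (k + 1 - 1) ^ 2)
        = ∑ k ∈ Finset.Icc (0 : ℤ) (N : ℤ), h k ^ 2 from
        Finset.sum_congr rfl fun k _ => by norm_num]
      exact hexpand 0 (N : ℤ) (by omega) (by omega) le_rfl (by omega)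
    calc S1 ≤ _ := step
    _ = 2 * (∑ k ∈ Finset.Icc (1 : ℤ) ((N : ℤ) + 1), h k ^ 2)
        + 2 * (∑ k ∈ Finset.Icc (1 : ℤ) ((N : ℤ) + 1), h (k - 1) ^ 2) := by
      rw [Finset.sum_add_distrib, Finset.mul_sum, Finset.mul_sum]
    _ = 4 * T := by rw [e1, e2]; ring
  have hup2 : S2 ≤ 16 * T := by
    have step : S2 ≤ ∑ k ∈ Finset.Icc (1 : ℤ) ((N : ℤ) + 2),
        (4 * h k ^ 2 + 8 * h (k - 1) ^ 2 + 4 * h (k - 2) ^ 2) := by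
      rw [hS2]
      refine Finset.sum_le_sum fun k _ => ?_
      unfold fd2
      have e : k - 2 + 2 = k := by ring
      have e' : k - 2 + 1 = k - 1 := by ring
      rw [e, e']
      nlinarith [sq_nonneg (h k + h (k - 1)), sq_nonneg (h (k - 1) + h (k - 2)),
        sq_nonneg (h k - h (k - 2))]
    have e1 : ∑ k ∈ Finset.Icc (1 : ℤ) ((N : ℤ) + 2), h k ^ 2 = T :=
      hexpand 1 ((N : ℤ) + 2) (by omega) le_rfl (by omega) le_rfl
    have e2 : ∑ k ∈ Finset.Icc (1 : ℤ) ((N : ℤ) + 2), h (k - 1) ^ 2 = T := by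
      have := sum_shift 0 ((N : ℤ) + 1) 1 (fun k => h (k - 1) ^ 2)
      simp only [zero_add] at this
      rw [show ((N : ℤ) + 1 + 1) = (N : ℤ) + 2 from by ring] at this
      rw [← this]
      rw [show (∑ k ∈ Finset.Icc (0 : ℤ) ((N : ℤ) + 1), h (k + 1 - 1) ^ 2)
        = ∑ k ∈ Finset.Icc (0 : ℤ) ((N : ℤ) + 1), h k ^ 2 from
        Finset.sum_congr rfl fun k _ => by norm_num]
      exact hexpand 0 ((N : ℤ) + 1) (by omega) (by omega) (by omega) (by omega)
    have e3 : ∑ k ∈ Finset.Icc (1 : ℤ) ((N : ℤ) + 2), h (k - 2) ^ 2 = T := by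
      have := sum_shift (-1) (N : ℤ) 2 (fun k => h (k - 2) ^ 2)
      rw [show (-1 : ℤ) + 2 = 1 from by ring] at this
      rw [← this]
      rw [show (∑ k ∈ Finset.Icc (-1 : ℤ) (N : ℤ), h (k + 2 - 2) ^ 2)
        = ∑ k ∈ Finset.Icc (-1 : ℤ) (N : ℤ), h k ^ 2 from
        Finset.sum_congr rfl fun k _ => by norm_num]
      exact hexpand (-1) (N : ℤ) le_rfl (by omega) le_rfl (by omega)
    calc S2 ≤ _ := step
    _ = 4 * (∑ k ∈ Finset.Icc (1 : ℤ) ((N : ℤ) + 2), h k ^ 2)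
        + 8 * (∑ k ∈ Finset.Icc (1 : ℤ) ((N : ℤ) + 2), h (k - 1) ^ 2)
        + 4 * (∑ k ∈ Finset.Icc (1 : ℤ) ((N : ℤ) + 2), h (k - 2) ^ 2) := by
      rw [Finset.sum_add_distrib, Finset.sum_add_distrib,
        Finset.mul_sum, Finset.mul_sum, Finset.mul_sum]
    _ = 16 * T := by rw [e1, e2, e3]; ring
  -- quadratic expansion
  set A : ℝ := (∑ k ∈ Finset.Icc (1 : ℤ) ((N : ℤ) + 2),
      p k * fd2 y (k - 2) * fd2 h (k - 2))
    - ∑ k ∈ Finset.Icc (1 : ℤ) ((N : ℤ) + 1), q k * fd y (k - 1) * fd h (k - 1) with hA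
  have key : ∀ ε : ℝ, Iq N p q (fun k => y k + ε * h k)
      = Iq N p q y + ε * A + ε ^ 2 * Iq N p q h := by
    intro ε
    have e2 : ∀ m : ℤ, fd2 (fun k => y k + ε * h k) m = fd2 y m + ε * fd2 h m := by
      intro m; unfold fd2; ring
    have e1 : ∀ m : ℤ, fd (fun k => y k + ε * h k) m = fd y m + ε * fd h m := by
      intro m; unfold fd; ring
    unfold Iq
    simp only [e1, e2]
    rw [show (∑ k ∈ Finset.Icc (1 : ℤ) ((N : ℤ) + 2),
        p k / 2 * (fd2 y (k - 2) + ε * fd2 h (k - 2)) ^ 2)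
      = ∑ k ∈ Finset.Icc (1 : ℤ) ((N : ℤ) + 2),
        (p k / 2 * fd2 y (k - 2) ^ 2 + ε * (p k * fd2 y (k - 2) * fd2 h (k - 2))
          + ε ^ 2 * (p k / 2 * fd2 h (k - 2) ^ 2)) from
      Finset.sum_congr rfl fun k _ => by ring]
    rw [show (∑ k ∈ Finset.Icc (1 : ℤ) ((N : ℤ) + 1),
        q k / 2 * (fd y (k - 1) + ε * fd h (k - 1)) ^ 2)
      = ∑ k ∈ Finset.Icc (1 : ℤ) ((N : ℤ) + 1),
        (q k / 2 * fd y (k - 1) ^ 2 + ε * (q k * fd y (k - 1) * fd h (k - 1))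
          + ε ^ 2 * (q k / 2 * fd h (k - 1) ^ 2)) from
      Finset.sum_congr rfl fun k _ => by ring]
    rw [Finset.sum_add_distrib, Finset.sum_add_distrib, Finset.sum_add_distrib,
      Finset.sum_add_distrib, ← Finset.mul_sum, ← Finset.mul_sum, ← Finset.mul_sum,
      ← Finset.mul_sum, hA]
    ring
  have hpoly : HasDerivAt (fun ε : ℝ => Iq N p q y + ε * A + ε ^ 2 * Iq N p q h) A 0 := by
    have h1 : HasDerivAt (fun ε : ℝ => ε * A) A 0 := by
      simpa using (hasDerivAt_id (0 : ℝ)).mul_const A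
    have h2 : HasDerivAt (fun ε : ℝ => ε ^ 2 * Iq N p q h) 0 0 := by
      simpa using (hasDerivAt_pow 2 (0 : ℝ)).mul_const (Iq N p q h)
    have h3 := ((hasDerivAt_const (0 : ℝ) (Iq N p q y)).add h1).add h2
    rw [zero_add, add_zero] at h3
    exact h3
  have hLA : L = A := by
    have hfe : (fun ε : ℝ => Iq N p q (fun k => y k + ε * h k))
        = fun ε => Iq N p q y + ε * A + ε ^ 2 * Iq N p q h := funext key
    rw [hfe] at hL
    exact hL.unique hpoly
  have hIqh : Iq N p q (fun k => y k + h k) - Iq N p q y - L = Iq N p q h := by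
    have h1 := key 1
    rw [show (fun k => y k + 1 * h k) = fun k => y k + h k from funext fun k => by ring] at h1
    rw [h1, hLA]; ring
  have hmain : (1 / 2) * (pmin * c2 - qmax * c1) * T ≤ Iq N p q h := by
    have hlow : pmin / 2 * S2 - qmax / 2 * S1 ≤ Iq N p q h := by
      unfold Iq
      have hpS : pmin / 2 * S2 ≤ ∑ k ∈ Finset.Icc (1 : ℤ) ((N : ℤ) + 2),
          p k / 2 * fd2 h (k - 2) ^ 2 := by
        rw [hS2, Finset.mul_sum]
        refine Finset.sum_le_sum fun k hk => ?_
        have hpk : pmin ≤ p k := hpmin.2 ⟨k, by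
          simpa [Set.mem_Icc] using (Finset.mem_Icc.mp hk), rfl⟩
        nlinarith [sq_nonneg (fd2 h (k - 2))]
      have hqS : (∑ k ∈ Finset.Icc (1 : ℤ) ((N : ℤ) + 1),
          q k / 2 * fd h (k - 1) ^ 2) ≤ qmax / 2 * S1 := by
        rw [hS1, Finset.mul_sum]
        refine Finset.sum_le_sum fun k hk => ?_
        have hqk : q k ≤ qmax := hqmax.2 ⟨k, by
          simpa [Set.mem_Icc] using (Finset.mem_Icc.mp hk), rfl⟩
        nlinarith [sq_nonneg (fd h (k - 1))]
      linarith
    have h2case : pmin * (c2 * T) ≤ pmin * S2 := by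
      by_cases hp0 : 0 ≤ pmin
      · rw [hc2, if_pos hp0]
        exact mul_le_mul_of_nonneg_left hray2 hp0
      · rw [hc2, if_neg hp0]
        push_neg at hp0
        nlinarith
    have h1case : qmax * S1 ≤ qmax * (c1 * T) := by
      by_cases hq0 : qmax < 0
      · rw [hc1, if_pos hq0]
        nlinarith
      · rw [hc1, if_neg hq0]
        push_neg at hq0
        nlinarith
    have heq : (1 / 2) * (pmin * c2 - qmax * c1) * T
        = pmin * (c2 * T) / 2 - qmax * (c1 * T) / 2 := by ring
    linarith
  have hTpos : 0 < T := by
    obtain ⟨k0, hk0mem, hk0⟩ := hne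
    have h1 : h k0 ^ 2 ≤ T := by
      rw [hT]
      exact Finset.single_le_sum (fun k _ => sq_nonneg (h k)) hk0mem
    have h2 : 0 < h k0 ^ 2 := by positivity
    linarith
  constructor
  · rw [hIqh]
    exact hmain
  · nlinarith [mul_pos hcond hTpos]
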